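/- arXiv:1301.6522 — 2 statements merged into one kernel-verified Lean document; each statement's English description precedes it below -/
import Mathlib

section
/- For probability measures on Polish spaces, the following are equivalent for random variables X_0,...,X_n and Y_0,...,Y_n: (1) the conditional distribution of Y^n given X^n factors as a product of kernels q_i(dy_i; y^{i-1}, x^i) depending only on past and present source symbols; (2) for each i = 0,...,n-1, Y_i is conditionally independent of (X_{i+1},...,X_n) given (X^i, Y^{i-1}); (3) for each i = 0,...,n-1, Y^i is conditionally independent of X_{i+1} given X^i; (4) for each i = 0,...,n-1, (X_{i+1},...,X_n) is conditionally independent of Y^i given X^i. -/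
open MeasureTheory ProbabilityTheory

open MeasurableSpace


namespace NonanticipAux

variable {Ω α β γ δ : Type*} [mΩ : MeasurableSpace Ω]
  {mα : MeasurableSpace α} {mβ : MeasurableSpace β}
  {mγ : MeasurableSpace γ} {mδ : MeasurableSpace δ}

lemma comap_pair (Z : Ω → γ) (W : Ω → δ) :
    MeasurableSpace.comap (fun ω => (Z ω, W ω)) inferInstance
      = MeasurableSpace.comap Z mγ ⊔ MeasurableSpace.comap W mδ := by
  rw [show (inferInstance : MeasurableSpace (γ × δ))
      = MeasurableSpace.comap Prod.fst mγ ⊔ MeasurableSpace.comap Prod.snd mδ from rfl,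
    MeasurableSpace.comap_sup, MeasurableSpace.comap_comp, MeasurableSpace.comap_comp]
  rfl

lemma comap_le_of_comp {W : Ω → δ} {Z : Ω → γ} {φ : γ → δ} (hφ : Measurable φ)
    (h : W = φ ∘ Z) : MeasurableSpace.comap W mδ ≤ MeasurableSpace.comap Z mγ := by
  subst h
  rw [← MeasurableSpace.comap_comp]
  exact MeasurableSpace.comap_mono hφ.comap_le

variable [StandardBorelSpace Ω] {μ : Measure Ω} [IsProbabilityMeasure μ]

/-- Doob's characterization of conditional independence. -/
lemma condIndepFun_iff_condexp_eq
    {f : Ω → α} {g : Ω → β} {Z : Ω → γ}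
    (hf : Measurable f) (hg : Measurable g) (hZ : Measurable Z) :
    CondIndepFun (MeasurableSpace.comap Z mγ) hZ.comap_le f g μ ↔
      ∀ s : Set α, MeasurableSet s →
        (μ⟦f ⁻¹' s | MeasurableSpace.comap (fun ω => (Z ω, g ω)) inferInstance⟧)
          =ᵐ[μ] (μ⟦f ⁻¹' s | MeasurableSpace.comap Z mγ⟧) := by
  have hmZ : MeasurableSpace.comap Z mγ ≤ mΩ := hZ.comap_le
  have hmZg : MeasurableSpace.comap (fun ω => (Z ω, g ω))
      (inferInstance : MeasurableSpace (γ × β)) ≤ mΩ := (hZ.prodMk hg).comap_le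
  have hle : MeasurableSpace.comap Z mγ ≤ MeasurableSpace.comap (fun ω => (Z ω, g ω))
      (inferInstance : MeasurableSpace (γ × β)) := by
    rw [comap_pair]; exact le_sup_left
  have hgle : MeasurableSpace.comap g mβ ≤ MeasurableSpace.comap (fun ω => (Z ω, g ω))
      (inferInstance : MeasurableSpace (γ × β)) := by
    rw [comap_pair]; exact le_sup_right
  rw [condIndepFun_iff_condExp_inter_preimage_eq_mul hf hg]
  constructor
  · -- forward: cond indep → condexp equality
    intro hmul s hs
    have hAmeas : MeasurableSet (f ⁻¹' s) := hf hs
    have hind : Integrable ((f ⁻¹' s).indicator (fun _ => (1:ℝ))) μ :=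
      (integrable_const (1:ℝ)).indicator hAmeas
    refine (ae_eq_condExp_of_forall_setIntegral_eq hmZg hind
      (fun _ _ _ => integrable_condExp.integrableOn) ?_
      ((stronglyMeasurable_condExp.mono hle).aestronglyMeasurable)).symm
    intro U hU _
    -- extend from the π-system of rectangles
    have h_eq : MeasurableSpace.comap (fun ω => (Z ω, g ω))
        (inferInstance : MeasurableSpace (γ × β)) = MeasurableSpace.generateFrom
        (Set.preimage (fun ω => (Z ω, g ω)) ''
          (Set.image2 (· ×ˢ ·) {s : Set γ | MeasurableSet s} {t : Set β | MeasurableSet t})) := by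
      conv_lhs => rw [← generateFrom_prod, MeasurableSpace.comap_generateFrom]
    have h_pi : IsPiSystem (Set.preimage (fun ω => (Z ω, g ω)) ''
        (Set.image2 (· ×ˢ ·) {s : Set γ | MeasurableSet s} {t : Set β | MeasurableSet t})) :=
      isPiSystem_prod.comap _
    revert hU
    refine fun hU => MeasurableSpace.induction_on_inter
      (m := MeasurableSpace.comap (fun ω => (Z ω, g ω)) inferInstance)
      (C := fun U _ =>
        ∫ x in U, (μ⟦f ⁻¹' s|MeasurableSpace.comap Z mγ⟧) x ∂μ
          = ∫ x in U, (f ⁻¹' s).indicator (fun _ => (1:ℝ)) x ∂μ)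
      h_eq h_pi (by simp) ?_ ?_ ?_ _ hU
    · -- basic rectangles
      rintro _ ⟨_, ⟨B, hB, t, ht, rfl⟩, rfl⟩
      have hUeq : (fun ω => (Z ω, g ω)) ⁻¹' (B ×ˢ t) = Z ⁻¹' B ∩ g ⁻¹' t :=
        Set.mk_preimage_prod Z g
      rw [hUeq]
      have hBm : MeasurableSet[MeasurableSpace.comap Z mγ] (Z ⁻¹' B) := ⟨B, hB, rfl⟩
      have htmeas : MeasurableSet (g ⁻¹' t) := hg ht
      have e1 : (g ⁻¹' t).indicator (μ⟦f ⁻¹' s|MeasurableSpace.comap Z mγ⟧)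
          = (μ⟦f ⁻¹' s|MeasurableSpace.comap Z mγ⟧)
            * ((g ⁻¹' t).indicator (fun _ => (1:ℝ))) := by
        ext ω; by_cases hω : ω ∈ g ⁻¹' t <;> simp [hω]
      have hint2 : Integrable ((μ⟦f ⁻¹' s|MeasurableSpace.comap Z mγ⟧)
          * ((g ⁻¹' t).indicator (fun _ => (1:ℝ)))) μ := by
        rw [← e1]; exact integrable_condExp.indicator htmeas
      have e2 : μ[(μ⟦f ⁻¹' s|MeasurableSpace.comap Z mγ⟧)
            * ((g ⁻¹' t).indicator (fun _ => (1:ℝ)))|MeasurableSpace.comap Z mγ]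
          =ᵐ[μ] (μ⟦f ⁻¹' s|MeasurableSpace.comap Z mγ⟧)
            * (μ⟦g ⁻¹' t|MeasurableSpace.comap Z mγ⟧) :=
        condExp_mul_of_stronglyMeasurable_left stronglyMeasurable_condExp hint2
          ((integrable_const (1:ℝ)).indicator htmeas)
      have e3 : (μ⟦f ⁻¹' s|MeasurableSpace.comap Z mγ⟧)
            * (μ⟦g ⁻¹' t|MeasurableSpace.comap Z mγ⟧)
          =ᵐ[μ] μ⟦f ⁻¹' s ∩ g ⁻¹' t|MeasurableSpace.comap Z mγ⟧ := by
        filter_upwards [hmul s t hs ht] with ω hω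
        simp only [Pi.mul_apply]
        exact hω.symm
      calc ∫ x in Z ⁻¹' B ∩ g ⁻¹' t, (μ⟦f ⁻¹' s|MeasurableSpace.comap Z mγ⟧) x ∂μ
          = ∫ x in Z ⁻¹' B,
              ((g ⁻¹' t).indicator (μ⟦f ⁻¹' s|MeasurableSpace.comap Z mγ⟧)) x ∂μ :=
            (setIntegral_indicator htmeas).symm
        _ = ∫ x in Z ⁻¹' B, ((μ⟦f ⁻¹' s|MeasurableSpace.comap Z mγ⟧)
              * ((g ⁻¹' t).indicator (fun _ => (1:ℝ)))) x ∂μ := by rw [e1]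
        _ = ∫ x in Z ⁻¹' B, (μ[(μ⟦f ⁻¹' s|MeasurableSpace.comap Z mγ⟧)
              * ((g ⁻¹' t).indicator (fun _ => (1:ℝ)))|MeasurableSpace.comap Z mγ]) x ∂μ :=
            (setIntegral_condExp hmZ hint2 hBm).symm
        _ = ∫ x in Z ⁻¹' B,
              (μ⟦f ⁻¹' s ∩ g ⁻¹' t|MeasurableSpace.comap Z mγ⟧) x ∂μ :=
            setIntegral_congr_ae (hmZ _ hBm) ((e2.trans e3).mono fun ω hω _ => hω)
        _ = ∫ x in Z ⁻¹' B, (f ⁻¹' s ∩ g ⁻¹' t).indicator (fun _ => (1:ℝ)) x ∂μ :=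
            setIntegral_condExp hmZ ((integrable_const (1:ℝ)).indicator
              (hAmeas.inter htmeas)) hBm
        _ = ∫ x in Z ⁻¹' B,
              ((g ⁻¹' t).indicator ((f ⁻¹' s).indicator (fun _ => (1:ℝ)))) x ∂μ := by
            congr 1
            ext ω
            by_cases h1 : ω ∈ f ⁻¹' s <;> by_cases h2 : ω ∈ g ⁻¹' t <;>
              simp [Set.indicator_apply, h1, h2]
        _ = ∫ x in Z ⁻¹' B ∩ g ⁻¹' t, (f ⁻¹' s).indicator (fun _ => (1:ℝ)) x ∂μ :=
            setIntegral_indicator htmeas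
    · -- complement
      intro t htm ht
      have htmeas : MeasurableSet t := hmZg _ htm
      have k1 := integral_add_compl htmeas (integrable_condExp (μ := μ)
        (m := MeasurableSpace.comap Z mγ) (f := (f ⁻¹' s).indicator (fun _ => (1:ℝ))))
      have k2 := integral_add_compl htmeas hind
      have k3 : ∫ x, (μ⟦f ⁻¹' s|MeasurableSpace.comap Z mγ⟧) x ∂μ
          = ∫ x, (f ⁻¹' s).indicator (fun _ => (1:ℝ)) x ∂μ :=
        integral_condExp hmZ
      linarith
    · -- countable disjoint unions
      intro u hdisj hum hu
      have humeas : ∀ i, MeasurableSet (u i) := fun i => hmZg _ (hum i)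
      rw [integral_iUnion humeas hdisj integrable_condExp.integrableOn,
        integral_iUnion humeas hdisj hind.integrableOn]
      exact tsum_congr hu
  · -- backward: condexp equality → cond indep
    intro hcond s t hs ht
    have hAmeas : MeasurableSet (f ⁻¹' s) := hf hs
    have hBmeas : MeasurableSet (g ⁻¹' t) := hg ht
    have e0 : (f ⁻¹' s ∩ g ⁻¹' t).indicator (fun _ => (1:ℝ))
        = ((g ⁻¹' t).indicator (fun _ => (1:ℝ))) * ((f ⁻¹' s).indicator (fun _ => (1:ℝ))) := by
      ext ω; by_cases h1 : ω ∈ f ⁻¹' s <;> by_cases h2 : ω ∈ g ⁻¹' t <;>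
        simp [Set.indicator_apply, h1, h2]
    have hint : Integrable (((g ⁻¹' t).indicator (fun _ => (1:ℝ)))
        * ((f ⁻¹' s).indicator (fun _ => (1:ℝ)))) μ := by
      rw [← e0]; exact (integrable_const (1:ℝ)).indicator (hAmeas.inter hBmeas)
    have tower : (μ⟦f ⁻¹' s ∩ g ⁻¹' t|MeasurableSpace.comap Z mγ⟧)
        =ᵐ[μ] μ[μ[(f ⁻¹' s ∩ g ⁻¹' t).indicator (fun _ => (1:ℝ))|
            MeasurableSpace.comap (fun ω => (Z ω, g ω)) inferInstance]|
          MeasurableSpace.comap Z mγ] :=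
      (condExp_condExp_of_le hle hmZg).symm
    have hsm : StronglyMeasurable[MeasurableSpace.comap (fun ω => (Z ω, g ω))
        (inferInstance : MeasurableSpace (γ × β))]
        ((g ⁻¹' t).indicator (fun _ => (1:ℝ))) := by
      refine StronglyMeasurable.indicator ?_ (hgle _ ⟨t, ht, rfl⟩)
      exact @stronglyMeasurable_const _ _ _ _ (1:ℝ)
    have inner1 : μ[(f ⁻¹' s ∩ g ⁻¹' t).indicator (fun _ => (1:ℝ))|
          MeasurableSpace.comap (fun ω => (Z ω, g ω)) inferInstance]
        =ᵐ[μ] ((g ⁻¹' t).indicator (fun _ => (1:ℝ)))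
          * (μ⟦f ⁻¹' s|MeasurableSpace.comap (fun ω => (Z ω, g ω)) inferInstance⟧) := by
      rw [e0]
      exact condExp_mul_of_stronglyMeasurable_left hsm hint
        ((integrable_const (1:ℝ)).indicator hAmeas)
    have inner2 : ((g ⁻¹' t).indicator (fun _ => (1:ℝ)))
          * (μ⟦f ⁻¹' s|MeasurableSpace.comap (fun ω => (Z ω, g ω)) inferInstance⟧)
        =ᵐ[μ] ((g ⁻¹' t).indicator (fun _ => (1:ℝ)))
          * (μ⟦f ⁻¹' s|MeasurableSpace.comap Z mγ⟧) := by
      filter_upwards [hcond s hs] with ω hω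
      simp only [Pi.mul_apply, hω]
    have hint3 : Integrable (((g ⁻¹' t).indicator (fun _ => (1:ℝ)))
        * (μ⟦f ⁻¹' s|MeasurableSpace.comap Z mγ⟧)) μ := by
      have h' : ((g ⁻¹' t).indicator (fun _ => (1:ℝ)))
          * (μ⟦f ⁻¹' s|MeasurableSpace.comap Z mγ⟧)
          = (g ⁻¹' t).indicator (μ⟦f ⁻¹' s|MeasurableSpace.comap Z mγ⟧) := by
        ext ω; by_cases hω : ω ∈ g ⁻¹' t <;> simp [hω]
      rw [h']; exact integrable_condExp.indicator hBmeas
    have outer : μ[((g ⁻¹' t).indicator (fun _ => (1:ℝ)))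
          * (μ⟦f ⁻¹' s|MeasurableSpace.comap Z mγ⟧)|MeasurableSpace.comap Z mγ]
        =ᵐ[μ] (μ⟦f ⁻¹' s|MeasurableSpace.comap Z mγ⟧)
          * (μ⟦g ⁻¹' t|MeasurableSpace.comap Z mγ⟧) := by
      have comm : ((g ⁻¹' t).indicator (fun _ => (1:ℝ)))
          * (μ⟦f ⁻¹' s|MeasurableSpace.comap Z mγ⟧)
          = (μ⟦f ⁻¹' s|MeasurableSpace.comap Z mγ⟧)
            * ((g ⁻¹' t).indicator (fun _ => (1:ℝ))) := mul_comm _ _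
      rw [comm]
      exact condExp_mul_of_stronglyMeasurable_left stronglyMeasurable_condExp
        (comm ▸ hint3) ((integrable_const (1:ℝ)).indicator hBmeas)
    refine tower.trans (((condExp_congr_ae (inner1.trans inner2)).trans outer).mono ?_)
    intro ω hω
    simpa using hω
end NonanticipAux

namespace NonanticipAux

variable {Ω α β γ δ δ' : Type*} [mΩ : MeasurableSpace Ω]
  {mα : MeasurableSpace α} {mβ : MeasurableSpace β}
  {mγ : MeasurableSpace γ} {mδ : MeasurableSpace δ} {mδ' : MeasurableSpace δ'}


lemma comap_pair_eq_left {Z : Ω → γ} {W : Ω → δ}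
    (h : MeasurableSpace.comap W mδ ≤ MeasurableSpace.comap Z mγ) :
    MeasurableSpace.comap (fun ω => (Z ω, W ω)) inferInstance
      = MeasurableSpace.comap Z mγ := by
  rw [comap_pair]; exact sup_eq_left.mpr h


lemma comap_pair_assoc (Z : Ω → γ) (g : Ω → β) (h : Ω → δ) :
    MeasurableSpace.comap (fun ω => ((Z ω, g ω), h ω)) inferInstance
      = MeasurableSpace.comap (fun ω => (Z ω, (g ω, h ω))) inferInstance := by
  rw [comap_pair (fun ω => (Z ω, g ω)) h, comap_pair Z g,
    comap_pair Z (fun ω => (g ω, h ω)), comap_pair g h, sup_assoc]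

lemma condIndepFun_congr_m [StandardBorelSpace Ω] {μ : Measure Ω} [IsFiniteMeasure μ]
    {m₁ m₂ : MeasurableSpace Ω} (h : m₁ = m₂) {hm₁ : m₁ ≤ mΩ} (hm₂ : m₂ ≤ mΩ)
    {f : Ω → α} {g : Ω → β} (hi : CondIndepFun m₁ hm₁ f g μ) :
    CondIndepFun m₂ hm₂ f g μ := by subst h; exact hi

variable [StandardBorelSpace Ω] {μ : Measure Ω} [IsProbabilityMeasure μ]
  {f : Ω → α} {g : Ω → β} {h : Ω → δ} {Z : Ω → γ}


lemma cif_symm {m : MeasurableSpace Ω} {hm : m ≤ mΩ} {f : Ω → α} {g : Ω → β}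
    (h : CondIndepFun m hm f g μ) : CondIndepFun m hm g f μ :=
  Kernel.IndepFun.symm h

/-- Weak union: `f ⟂ (g,h) | Z` implies `f ⟂ h | (Z,g)`. -/
lemma weak_union (hf : Measurable f) (hg : Measurable g) (hh : Measurable h)
    (hZ : Measurable Z)
    (H : CondIndepFun (MeasurableSpace.comap Z mγ) hZ.comap_le
      f (fun ω => (g ω, h ω)) μ) :
    CondIndepFun (MeasurableSpace.comap (fun ω => (Z ω, g ω)) inferInstance)
      (hZ.prodMk hg).comap_le f h μ := by
  rw [condIndepFun_iff_condexp_eq hf hh (hZ.prodMk hg)]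
  rw [condIndepFun_iff_condexp_eq hf (hg.prodMk hh) hZ] at H
  intro s hs
  have hkey := H s hs
  rw [comap_pair_assoc Z g h]
  have hle2 : MeasurableSpace.comap (fun ω => (Z ω, g ω))
      (inferInstance : MeasurableSpace (γ × β))
      ≤ MeasurableSpace.comap (fun ω => (Z ω, (g ω, h ω)))
        (inferInstance : MeasurableSpace (γ × β × δ)) := by
    rw [comap_pair Z g, comap_pair Z (fun ω => (g ω, h ω)), comap_pair g h]
    exact sup_le_sup le_rfl le_sup_left
  have hZle : MeasurableSpace.comap Z mγ
      ≤ MeasurableSpace.comap (fun ω => (Z ω, g ω))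
        (inferInstance : MeasurableSpace (γ × β)) := by
    rw [comap_pair Z g]; exact le_sup_left
  have h2 : (μ⟦f ⁻¹' s|MeasurableSpace.comap (fun ω => (Z ω, g ω)) inferInstance⟧)
      =ᵐ[μ] (μ⟦f ⁻¹' s|MeasurableSpace.comap Z mγ⟧) := by
    have t1 : (μ⟦f ⁻¹' s|MeasurableSpace.comap (fun ω => (Z ω, g ω)) inferInstance⟧)
        =ᵐ[μ] μ[μ[(f ⁻¹' s).indicator (fun _ => (1:ℝ))|
            MeasurableSpace.comap (fun ω => (Z ω, (g ω, h ω))) inferInstance]|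
          MeasurableSpace.comap (fun ω => (Z ω, g ω)) inferInstance] :=
      (condExp_condExp_of_le hle2 (hZ.prodMk (hg.prodMk hh)).comap_le).symm
    have t2 : μ[μ[(f ⁻¹' s).indicator (fun _ => (1:ℝ))|
            MeasurableSpace.comap (fun ω => (Z ω, (g ω, h ω))) inferInstance]|
          MeasurableSpace.comap (fun ω => (Z ω, g ω)) inferInstance]
        =ᵐ[μ] μ[(μ⟦f ⁻¹' s|MeasurableSpace.comap Z mγ⟧)|
          MeasurableSpace.comap (fun ω => (Z ω, g ω)) inferInstance] :=
      condExp_congr_ae hkey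
    have t3 : μ[(μ⟦f ⁻¹' s|MeasurableSpace.comap Z mγ⟧)|
          MeasurableSpace.comap (fun ω => (Z ω, g ω)) inferInstance]
        = (μ⟦f ⁻¹' s|MeasurableSpace.comap Z mγ⟧) :=
      condExp_of_stronglyMeasurable (hZ.prodMk hg).comap_le
        (stronglyMeasurable_condExp.mono hZle) integrable_condExp
    exact (t1.trans t2).trans (Filter.EventuallyEq.of_eq t3)
  exact hkey.trans h2.symm

/-- Contraction: `f ⟂ g | Z` and `f ⟂ h | (Z,g)` imply `f ⟂ (g,h) | Z`. -/
lemma contraction (hf : Measurable f) (hg : Measurable g) (hh : Measurable h)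
    (hZ : Measurable Z)
    (H1 : CondIndepFun (MeasurableSpace.comap Z mγ) hZ.comap_le f g μ)
    (H2 : CondIndepFun (MeasurableSpace.comap (fun ω => (Z ω, g ω)) inferInstance)
      (hZ.prodMk hg).comap_le f h μ) :
    CondIndepFun (MeasurableSpace.comap Z mγ) hZ.comap_le
      f (fun ω => (g ω, h ω)) μ := by
  rw [condIndepFun_iff_condexp_eq hf (hg.prodMk hh) hZ]
  rw [condIndepFun_iff_condexp_eq hf hg hZ] at H1
  rw [condIndepFun_iff_condexp_eq hf hh (hZ.prodMk hg)] at H2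
  intro s hs
  rw [← comap_pair_assoc Z g h]
  exact (H2 s hs).trans (H1 s hs)

/-- Augmentation: if `f ⟂ g | Z` and `W` is a function of `Z`, then `f ⟂ (W,g) | Z`. -/
lemma augment {W : Ω → δ'} {φ : γ → δ'} (hf : Measurable f) (hg : Measurable g)
    (hZ : Measurable Z) (hφ : Measurable φ) (hW : W = φ ∘ Z)
    (H : CondIndepFun (MeasurableSpace.comap Z mγ) hZ.comap_le f g μ) :
    CondIndepFun (MeasurableSpace.comap Z mγ) hZ.comap_le
      f (fun ω => (W ω, g ω)) μ := by
  have hWm : Measurable W := hW ▸ hφ.comp hZ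
  rw [condIndepFun_iff_condexp_eq hf (hWm.prodMk hg) hZ]
  rw [condIndepFun_iff_condexp_eq hf hg hZ] at H
  intro s hs
  have hmeq : MeasurableSpace.comap (fun ω => (Z ω, (W ω, g ω)))
      (inferInstance : MeasurableSpace (γ × δ' × β))
      = MeasurableSpace.comap (fun ω => (Z ω, g ω))
        (inferInstance : MeasurableSpace (γ × β)) := by
    rw [comap_pair Z (fun ω => (W ω, g ω)), comap_pair W g, comap_pair Z g, ← sup_assoc,
      sup_eq_left.mpr (comap_le_of_comp hφ hW)]
  rw [hmeq]
  exact H s hs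

end NonanticipAux

namespace NonanticipAux

variable {Ω E : Type*} [MeasurableSpace Ω] [MeasurableSpace E]

def mergeAt {a b c : ℕ} (h : c = a + b) : ((Fin a → E) × (Fin b → E)) → (Fin c → E) :=
  fun p k => if hk : (k : ℕ) < a then p.1 ⟨k, hk⟩
    else p.2 ⟨(k : ℕ) - a, by have := k.isLt; omega⟩

lemma measurable_mergeAt {a b c : ℕ} (h : c = a + b) :
    Measurable (mergeAt (E := E) h) := by
  apply measurable_pi_lambda
  intro k
  unfold mergeAt
  by_cases hk : (k : ℕ) < a
  · simp only [dif_pos hk]; exact (measurable_pi_apply _).comp measurable_fst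
  · simp only [dif_neg hk]; exact (measurable_pi_apply _).comp measurable_snd

def splitAtL (a : ℕ) {c : ℕ} (h : a ≤ c) : (Fin c → E) → (Fin a → E) :=
  fun x j => x ⟨j, by have := j.isLt; omega⟩

lemma measurable_splitAtL (a : ℕ) {c : ℕ} (h : a ≤ c) :
    Measurable (splitAtL (E := E) a h) :=
  measurable_pi_lambda _ fun _ => measurable_pi_apply _

def splitAtR (a : ℕ) {b c : ℕ} (h : c = a + b) : (Fin c → E) → (Fin b → E) :=
  fun x j => x ⟨a + j, by have := j.isLt; omega⟩

lemma measurable_splitAtR (a : ℕ) {b c : ℕ} (h : c = a + b) :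
    Measurable (splitAtR (E := E) a h) :=
  measurable_pi_lambda _ fun _ => measurable_pi_apply _

def snocMerge {a c : ℕ} (h : c = a + 1) : ((Fin a → E) × E) → (Fin c → E) :=
  fun p k => if hk : (k : ℕ) < a then p.1 ⟨k, hk⟩ else p.2

lemma measurable_snocMerge {a c : ℕ} (h : c = a + 1) :
    Measurable (snocMerge (E := E) h) := by
  apply measurable_pi_lambda
  intro k
  unfold snocMerge
  by_cases hk : (k : ℕ) < a
  · simp only [dif_pos hk]; exact (measurable_pi_apply _).comp measurable_fst
  · simp only [dif_neg hk]; exact measurable_snd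

def snocLast (a : ℕ) {c : ℕ} (h : c = a + 1) : (Fin c → E) → E :=
  fun x => x ⟨a, by omega⟩

lemma measurable_snocLast (a : ℕ) {c : ℕ} (h : c = a + 1) :
    Measurable (snocLast (E := E) a h) := measurable_pi_apply _

def consMerge {m c : ℕ} (h : c = m + 1) : (E × (Fin m → E)) → (Fin c → E) :=
  fun p k => if _ : (k : ℕ) = 0 then p.1
    else p.2 ⟨(k : ℕ) - 1, by have := k.isLt; omega⟩

lemma measurable_consMerge {m c : ℕ} (h : c = m + 1) :
    Measurable (consMerge (E := E) h) := by
  apply measurable_pi_lambda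
  intro k
  unfold consMerge
  by_cases hk : (k : ℕ) = 0
  · simp only [dif_pos hk]; exact measurable_fst
  · simp only [dif_neg hk]; exact (measurable_pi_apply _).comp measurable_snd

def consHead {c : ℕ} (h : 0 < c) : (Fin c → E) → E := fun x => x ⟨0, h⟩

lemma measurable_consHead {c : ℕ} (h : 0 < c) :
    Measurable (consHead (E := E) h) := measurable_pi_apply _

def consTail {m c : ℕ} (h : c = m + 1) : (Fin c → E) → (Fin m → E) :=
  fun x j => x ⟨(j : ℕ) + 1, by have := j.isLt; omega⟩

lemma measurable_consTail {m c : ℕ} (h : c = m + 1) :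
    Measurable (consTail (E := E) h) :=
  measurable_pi_lambda _ fun _ => measurable_pi_apply _

end NonanticipAux

section

variable {Ω E F : Type*} [MeasurableSpace Ω] [MeasurableSpace E] [MeasurableSpace F]

/-- The vector `X^i = (X_0, ..., X_i)` of past-and-present source symbols. -/
abbrev pastPresent (X : ℕ → Ω → E) (i : ℕ) : Ω → (Fin (i + 1) → E) :=
  fun ω j => X j ω

/-- The vector `Y^{i-1} = (Y_0, ..., Y_{i-1})` of strictly past symbols. -/
abbrev strictPast (Y : ℕ → Ω → F) (i : ℕ) : Ω → (Fin i → F) :=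
  fun ω j => Y j ω

/-- The vector `(X_{i+1}, ..., X_n)` of future source symbols. -/
abbrev future (X : ℕ → Ω → E) (i n : ℕ) : Ω → (Fin (n - i) → E) :=
  fun ω j => X (i + 1 + j) ω



namespace NonanticipAux

variable (X : ℕ → Ω → E) (Y : ℕ → Ω → F)

lemma meas_pastPresent (hX : ∀ i, Measurable (X i)) (i : ℕ) :
    Measurable (pastPresent X i) := measurable_pi_lambda _ fun j => hX j

lemma meas_strictPast (hY : ∀ i, Measurable (Y i)) (i : ℕ) :
    Measurable (strictPast Y i) := measurable_pi_lambda _ fun j => hY j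

lemma meas_future (hX : ∀ i, Measurable (X i)) (i n : ℕ) :
    Measurable (future X i n) := measurable_pi_lambda _ fun j => hX _

-- c1 : merging past and future gives the full past
lemma c1 {i n : ℕ} (h : i < n) :
    mergeAt (E := E) (show n + 1 = (i + 1) + (n - i) by omega)
        ∘ (fun ω => (pastPresent X i ω, future X i n ω))
      = pastPresent X n := by
  funext ω k
  simp only [Function.comp_apply, mergeAt]
  split_ifs with hk
  · rfl
  · show X (i + 1 + ((k : ℕ) - (i + 1))) ω = X k ω
    congr 1
    have := k.isLt
    omega

-- c2 : splitting the full past into past and future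
lemma c2 {i n : ℕ} (h : i < n) :
    (fun ω => (pastPresent X i ω, future X i n ω))
      = (fun x => (splitAtL (E := E) (i + 1) (by omega) x,
          splitAtR (E := E) (i + 1) (show n + 1 = (i + 1) + (n - i) by omega) x))
        ∘ pastPresent X n := rfl

-- c3 : splitting `X^{i+1}` into `(X^i, X_{i+1})`
lemma c3 (i : ℕ) :
    (fun ω => (pastPresent X i ω, X (i + 1) ω))
      = (fun x => (splitAtL (E := E) (i + 1) (by omega) x,
          snocLast (E := E) (i + 1) rfl x))
        ∘ pastPresent X (i + 1) := rfl

-- c4 : merging `(X^i, X_{i+1})` into `X^{i+1}`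
lemma c4 (i : ℕ) :
    snocMerge (E := E) rfl ∘ (fun ω => (pastPresent X i ω, X (i + 1) ω))
      = pastPresent X (i + 1) := by
  funext ω k
  simp only [Function.comp_apply, snocMerge]
  split_ifs with hk
  · rfl
  · show X (i + 1) ω = X k ω
    congr 1
    have := k.isLt
    omega

-- comap equality for c3/c4
lemma comap_pair_snoc (i : ℕ) :
    MeasurableSpace.comap (fun ω => (pastPresent X i ω, X (i + 1) ω)) inferInstance
      = MeasurableSpace.comap (pastPresent X (i + 1)) inferInstance := by
  refine le_antisymm ?_ ?_
  · exact comap_le_of_comp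
      ((measurable_splitAtL (i+1) (by omega)).prodMk (measurable_snocLast (i+1) rfl))
      (c3 X i)
  · exact comap_le_of_comp (measurable_snocMerge rfl) (c4 X i).symm

-- c5 : splitting the future into head and tail
lemma c5 {i n : ℕ} (h : i + 1 < n) :
    (fun ω => (X (i + 1) ω, future X (i + 1) n ω))
      = (fun x => (consHead (E := E) (show 0 < n - i by omega) x,
          consTail (E := E) (show n - i = (n - (i + 1)) + 1 by omega) x))
        ∘ future X i n := by
  funext ω
  refine Prod.ext ?_ ?_
  · rfl
  · funext j
    show X (i + 1 + 1 + (j : ℕ)) ω = X (i + 1 + ((j : ℕ) + 1)) ω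
    congr 1
    omega

-- c6 : merging head and tail of the future
lemma c6 {i n : ℕ} (h : i + 1 < n) :
    consMerge (E := E) (show n - i = (n - (i + 1)) + 1 by omega)
        ∘ (fun ω => (X (i + 1) ω, future X (i + 1) n ω))
      = future X i n := by
  funext ω k
  simp only [Function.comp_apply, consMerge]
  split_ifs with hk
  · show X (i + 1) ω = X (i + 1 + (k : ℕ)) ω
    congr 1
    omega
  · show X (i + 1 + 1 + ((k : ℕ) - 1)) ω = X (i + 1 + (k : ℕ)) ω
    congr 1
    have := k.isLt
    omega

-- c8 : when `i+1 = n` the future is a single symbol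
lemma c8 {i n : ℕ} (h : i + 1 = n) :
    future X i n = (fun e (_ : Fin (n - i)) => e) ∘ X (i + 1) := by
  funext ω j
  show X (i + 1 + (j : ℕ)) ω = X (i + 1) ω
  congr 1
  have := j.isLt
  omega

-- c9 : restriction of the past
lemma c9 (i : ℕ) :
    pastPresent Y i = splitAtL (E := F) (i + 1) (by omega) ∘ pastPresent Y (i + 1) := rfl

-- c10 : `Y^0` as a function of `Y_0`
lemma c10 : pastPresent Y 0 = (fun y (_ : Fin 1) => y) ∘ Y 0 := by
  funext ω j
  show Y (j : ℕ) ω = Y 0 ω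
  congr 1
  have := j.isLt
  omega

-- c11 : `Y^{-1}` is trivial
lemma c11 : strictPast Y 0 = (fun _ => (Fin.elim0 : Fin 0 → F)) ∘ pastPresent X 0 := by
  funext ω j
  exact j.elim0

-- c12 : splitting `Y^i` into `(Y^{i-1}, Y_i)`
lemma c12 (i : ℕ) :
    (fun ω => (strictPast Y i ω, Y i ω))
      = (fun y => (splitAtL (E := F) i (by omega) y, snocLast (E := F) i rfl y))
        ∘ pastPresent Y i := rfl

-- c13 : head of future
lemma c13 {i n : ℕ} (h : i < n) :
    X (i + 1) = consHead (E := E) (show 0 < n - i by omega) ∘ future X i n := rfl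

end NonanticipAux

/-- Equivalent characterizations of nonanticipation (Lemma 1 of the paper): for random
variables `X_0,...,X_n` and `Y_0,...,Y_n` on Polish (standard Borel) spaces, the
following are equivalent:
(1) the conditional distribution of `Y^n` given `X^n` factors as a product of kernels
    `q_i(dy_i; y^{i-1}, x^i)` depending only on past and present source symbols, i.e.
    for each `i`, `Y_i` is conditionally independent of the whole source `X^n` given
    `(X^i, Y^{i-1})`;
(2) for each `i = 0,...,n-1`, `Y_i ⟂ (X_{i+1},...,X_n) | (X^i, Y^{i-1})`;
(3) for each `i = 0,...,n-1`, `Y^i ⟂ X_{i+1} | X^i`;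
(4) for each `i = 0,...,n-1`, `(X_{i+1},...,X_n) ⟂ Y^i | X^i`. -/
theorem nonanticipative_markov_chain_tfae
    [StandardBorelSpace Ω] [Nonempty Ω]
    [StandardBorelSpace E] [Nonempty E] [StandardBorelSpace F] [Nonempty F]
    (μ : Measure Ω) [IsProbabilityMeasure μ]
    (n : ℕ) (X : ℕ → Ω → E) (Y : ℕ → Ω → F)
    (hX : ∀ i, Measurable (X i)) (hY : ∀ i, Measurable (Y i)) :
    List.TFAE
      [ -- (1) nonanticipative factorization of the reproduction distribution
        ∀ i < n, CondIndepFun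
          (MeasurableSpace.comap
            (fun ω => (pastPresent X i ω, strictPast Y i ω)) inferInstance)
          (by apply Measurable.comap_le; fun_prop)
          (Y i) (pastPresent X n) μ,
        -- (2) Y_i ⟂ (X_{i+1},...,X_n) | (X^i, Y^{i-1})
        ∀ i < n, CondIndepFun
          (MeasurableSpace.comap
            (fun ω => (pastPresent X i ω, strictPast Y i ω)) inferInstance)
          (by apply Measurable.comap_le; fun_prop)
          (Y i) (future X i n) μ,
        -- (3) Y^i ⟂ X_{i+1} | X^i
        ∀ i < n, CondIndepFun
          (MeasurableSpace.comap (pastPresent X i) inferInstance)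
          (by apply Measurable.comap_le; fun_prop)
          (pastPresent Y i) (X (i + 1)) μ,
        -- (4) (X_{i+1},...,X_n) ⟂ Y^i | X^i
        ∀ i < n, CondIndepFun
          (MeasurableSpace.comap (pastPresent X i) inferInstance)
          (by apply Measurable.comap_le; fun_prop)
          (future X i n) (pastPresent Y i) μ ] := by
  have hP : ∀ i, Measurable (pastPresent X i) := NonanticipAux.meas_pastPresent X hX
  have hS : ∀ i, Measurable (strictPast Y i) := NonanticipAux.meas_strictPast Y hY
  have hFu : ∀ i, Measurable (future X i n) := fun i => NonanticipAux.meas_future X hX i n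
  have hQ : ∀ i, Measurable (pastPresent Y i) := NonanticipAux.meas_pastPresent Y hY
  tfae_have 1 → 2 := by
    intro H i hi
    have h2 := (H i hi).comp measurable_id
      (NonanticipAux.measurable_splitAtR (i + 1) (show n + 1 = (i + 1) + (n - i) by omega))
    simp only [Function.id_comp] at h2
    exact h2
  tfae_have 2 → 1 := by
    intro H i hi
    have h2 := NonanticipAux.augment (W := pastPresent X i) (hY i) (hFu i)
      ((hP i).prodMk (hS i)) measurable_fst rfl (H i hi)
    have h3 := h2.comp measurable_id
      (NonanticipAux.measurable_mergeAt (show n + 1 = (i + 1) + (n - i) by omega))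
    simp only [Function.id_comp] at h3
    rw [NonanticipAux.c1 X hi] at h3
    exact h3
  tfae_have 2 → 4 := by
    intro H
    have key : ∀ i, i < n → CondIndepFun
        (MeasurableSpace.comap (pastPresent X i) inferInstance)
        (Measurable.comap_le (hP i))
        (future X i n) (pastPresent Y i) μ := by
      intro i
      induction i with
      | zero =>
        intro h0
        have h2 : CondIndepFun (MeasurableSpace.comap (pastPresent X 0) inferInstance)
            (Measurable.comap_le (hP 0)) (Y 0) (future X 0 n) μ :=
          NonanticipAux.condIndepFun_congr_m
            (NonanticipAux.comap_pair_eq_left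
              (NonanticipAux.comap_le_of_comp measurable_const (NonanticipAux.c11 X Y)))
            (Measurable.comap_le (hP 0)) (H 0 h0)
        have h3 := (NonanticipAux.cif_symm h2).comp measurable_id
          (show Measurable (fun (y : F) (_ : Fin 1) => y) from
            measurable_pi_lambda _ fun _ => measurable_id)
        simp only [Function.id_comp] at h3
        rw [← NonanticipAux.c10 Y] at h3
        exact h3
      | succ i ih =>
        intro hsucc
        have hi : i < n := by omega
        have a1 := NonanticipAux.cif_symm (ih hi)
        have a2 := a1.comp measurable_id
          ((NonanticipAux.measurable_consHead (show 0 < n - i by omega)).prodMk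
            (NonanticipAux.measurable_consTail (show n - i = (n - (i + 1)) + 1 by omega)))
        simp only [Function.id_comp] at a2
        rw [← NonanticipAux.c5 X hsucc] at a2
        have a3 := NonanticipAux.weak_union (hQ i) (hX (i + 1)) (hFu (i + 1)) (hP i) a2
        have a4 := NonanticipAux.condIndepFun_congr_m (NonanticipAux.comap_pair_snoc X i)
          (Measurable.comap_le (hP (i + 1))) a3
        have a5 := NonanticipAux.cif_symm a4
        have a6 := NonanticipAux.cif_symm (H (i + 1) hsucc)
        have a7 := NonanticipAux.contraction (hFu (i + 1)) (hQ i) (hY (i + 1)) (hP (i + 1)) a5 a6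
        have a8 := a7.comp measurable_id (NonanticipAux.measurable_snocMerge rfl)
        simp only [Function.id_comp] at a8
        rw [NonanticipAux.c4 Y i] at a8
        exact a8
    exact fun i hi => key i hi
  tfae_have 4 → 3 := by
    intro H i hi
    have h1 := (H i hi).comp
      (NonanticipAux.measurable_consHead (show 0 < n - i by omega)) measurable_id
    simp only [Function.id_comp] at h1
    exact NonanticipAux.cif_symm h1
  tfae_have 3 → 4 := by
    intro H
    have key : ∀ d i, i < n → n - i = d → CondIndepFun
        (MeasurableSpace.comap (pastPresent X i) inferInstance)
        (Measurable.comap_le (hP i))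
        (future X i n) (pastPresent Y i) μ := by
      intro d
      induction d with
      | zero => intro i hi hd; omega
      | succ d ihd =>
        intro i hi hd
        by_cases hlast : i + 1 = n
        · have b2 := (NonanticipAux.cif_symm (H i hi)).comp
            (show Measurable (fun (e : E) (_ : Fin (n - i)) => e) from
              measurable_pi_lambda _ fun _ => measurable_id) measurable_id
          simp only [Function.id_comp] at b2
          rw [← NonanticipAux.c8 X hlast] at b2
          exact b2
        · have hsucc : i + 1 < n := by omega
          have b3 := ihd (i + 1) hsucc (by omega)
          have b4 := b3.comp measurable_id
            (NonanticipAux.measurable_splitAtL (i + 1) (by omega))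
          simp only [Function.id_comp] at b4
          have b5 : CondIndepFun
              (MeasurableSpace.comap
                (fun ω => (pastPresent X i ω, X (i + 1) ω)) inferInstance)
              (Measurable.comap_le ((hP i).prodMk (hX (i + 1))))
              (future X (i + 1) n) (pastPresent Y i) μ :=
            NonanticipAux.condIndepFun_congr_m (NonanticipAux.comap_pair_snoc X i).symm
              (Measurable.comap_le ((hP i).prodMk (hX (i + 1)))) b4
          have b6 := NonanticipAux.cif_symm b5
          have b7 := NonanticipAux.contraction (hQ i) (hX (i + 1)) (hFu (i + 1)) (hP i)
            (H i hi) b6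
          have b8 := (NonanticipAux.cif_symm b7).comp
            (NonanticipAux.measurable_consMerge (show n - i = (n - (i + 1)) + 1 by omega))
            measurable_id
          simp only [Function.id_comp] at b8
          rw [NonanticipAux.c6 X hsucc] at b8
          exact b8
    exact fun i hi => key (n - i) i hi rfl
  tfae_have 4 → 2 := by
    intro H i hi
    have d2 := (NonanticipAux.cif_symm (H i hi)).comp
      ((NonanticipAux.measurable_splitAtL i (by omega)).prodMk
        (NonanticipAux.measurable_snocLast i rfl))
      measurable_id
    simp only [Function.id_comp] at d2
    have d3 := NonanticipAux.cif_symm d2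
    have d4 := NonanticipAux.weak_union (hFu i) (hS i) (hY i) (hP i) d3
    exact NonanticipAux.cif_symm d4
  tfae_finish


end
end

section
/- For a fixed probability measure μ on X, the mutual information functional Q ↦ I(μ, Q) := D(μ ⊗ Q ‖ μ × ν_Q), where ν_Q is the Y-marginal of μ ⊗ Q, is convex in the kernel Q: for kernels Q₁, Q₂ and λ ∈ [0,1], I(μ, λQ₁ + (1−λ)Q₂) ≤ λ I(μ, Q₁) + (1−λ) I(μ, Q₂). -/
open MeasureTheory ProbabilityTheory
open scoped ENNReal

-- Relative entropy (Kullback–Leibler divergence), valued in `[0,∞]`.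
open Classical in
noncomputable def klDiv {Z : Type*} [MeasurableSpace Z] (P Q : Measure Z) : ℝ≥0∞ :=
  if P ≪ Q ∧ Integrable (llr P Q) P then ENNReal.ofReal (∫ z, llr P Q z ∂P) else ⊤

/-- The mutual information `I(μ, Q) := D(μ ⊗ Q ‖ μ × ν_Q)`, where `ν_Q` is the second
marginal of `μ ⊗ Q`. -/
noncomputable def mutualInfoFun {X Y : Type*} [MeasurableSpace X] [MeasurableSpace Y]
    (μ : Measure X) (Q : Kernel X Y) : ℝ≥0∞ :=
  klDiv (μ.compProd Q) (μ.prod ((μ.compProd Q).snd))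

lemma neg_exp_le_mul_log {x : ℝ} (hx : 0 ≤ x) : -Real.exp (-1) ≤ x * Real.log x := by
  rcases eq_or_lt_of_le hx with h | h
  · rw [← h]
    simp [le_of_lt (Real.exp_pos (-1))]
  · have key : Real.log x⁻¹ ≤ x⁻¹ * Real.exp (-1) := by
      have h2 := Real.log_le_sub_one_of_pos (mul_pos (inv_pos.mpr h) (Real.exp_pos (-1)))
      rw [Real.log_mul (ne_of_gt (inv_pos.mpr h)) (Real.exp_ne_zero _), Real.log_exp] at h2
      linarith
    rw [Real.log_inv] at key
    have h2 : x * (-Real.log x) ≤ x * (x⁻¹ * Real.exp (-1)) :=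
      mul_le_mul_of_nonneg_left key hx
    rw [← mul_assoc, mul_inv_cancel₀ h.ne', one_mul] at h2
    linarith


lemma klDiv_of_ac {Z : Type*} [MeasurableSpace Z] {P Q : Measure Z}
    (h1 : P ≪ Q) (h2 : Integrable (llr P Q) P) :
    klDiv P Q = ENNReal.ofReal (∫ z, llr P Q z ∂P) := by
  unfold klDiv; exact if_pos ⟨h1, h2⟩

lemma klDiv_of_not {Z : Type*} [MeasurableSpace Z] {P Q : Measure Z}
    (h : ¬ (P ≪ Q ∧ Integrable (llr P Q) P)) :
    klDiv P Q = ⊤ := by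
  unfold klDiv; exact if_neg h

lemma klDiv_convex {Z : Type*} [MeasurableSpace Z] (P₁ P₂ R₁ R₂ : Measure Z)
    [IsProbabilityMeasure P₁] [IsProbabilityMeasure P₂]
    [IsProbabilityMeasure R₁] [IsProbabilityMeasure R₂]
    (a : ℝ≥0∞) (ha : a ≤ 1) :
    klDiv (a • P₁ + (1 - a) • P₂) (a • R₁ + (1 - a) • R₂)
      ≤ a * klDiv P₁ R₁ + (1 - a) * klDiv P₂ R₂ := by
  rcases eq_or_ne a 0 with rfl | ha0
  · simp
  rcases eq_or_ne a 1 with rfl | ha1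
  · simp
  set b : ℝ≥0∞ := 1 - a with hb_def
  have ha_top : a ≠ ∞ := (ha.trans_lt ENNReal.one_lt_top).ne
  have hb_top : b ≠ ∞ := ((tsub_le_self).trans_lt ENNReal.one_lt_top).ne
  have hb0 : b ≠ 0 := fun h => ha1 (le_antisymm ha (tsub_eq_zero_iff_le.mp h))
  have hab : a + b = 1 := add_tsub_cancel_of_le ha
  by_cases h₁ : P₁ ≪ R₁ ∧ Integrable (llr P₁ R₁) P₁
  swap
  · rw [klDiv_of_not h₁, ENNReal.mul_top ha0, top_add]; exact le_top
  by_cases h₂ : P₂ ≪ R₂ ∧ Integrable (llr P₂ R₂) P₂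
  swap
  · rw [klDiv_of_not h₂, ENNReal.mul_top hb0, add_top]; exact le_top
  obtain ⟨hac₁, hint₁⟩ := h₁
  obtain ⟨hac₂, hint₂⟩ := h₂
  set P : Measure Z := a • P₁ + b • P₂ with hP_def
  set R : Measure Z := a • R₁ + b • R₂ with hR_def
  haveI : IsFiniteMeasure (a • P₁) :=
    ⟨by rw [Measure.smul_apply, measure_univ, smul_eq_mul, mul_one]; exact ha.trans_lt ENNReal.one_lt_top⟩
  haveI : IsFiniteMeasure (b • P₂) :=
    ⟨by rw [Measure.smul_apply, measure_univ, smul_eq_mul, mul_one]; exact tsub_le_self.trans_lt ENNReal.one_lt_top⟩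
  haveI : IsFiniteMeasure (a • R₁) :=
    ⟨by rw [Measure.smul_apply, measure_univ, smul_eq_mul, mul_one]; exact ha.trans_lt ENNReal.one_lt_top⟩
  haveI : IsFiniteMeasure (b • R₂) :=
    ⟨by rw [Measure.smul_apply, measure_univ, smul_eq_mul, mul_one]; exact tsub_le_self.trans_lt ENNReal.one_lt_top⟩
  haveI : IsProbabilityMeasure P :=
    ⟨by rw [Measure.add_apply, Measure.smul_apply, Measure.smul_apply, measure_univ, measure_univ,
      smul_eq_mul, smul_eq_mul, mul_one, mul_one, hab]⟩
  haveI : IsProbabilityMeasure R :=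
    ⟨by rw [Measure.add_apply, Measure.smul_apply, Measure.smul_apply, measure_univ, measure_univ,
      smul_eq_mul, smul_eq_mul, mul_one, mul_one, hab]⟩
  have hacR₁ : R₁ ≪ R := by
    refine Measure.AbsolutelyContinuous.mk fun s hs h0 => ?_
    rw [Measure.add_apply, add_eq_zero, Measure.smul_apply, Measure.smul_apply, smul_eq_mul,
      smul_eq_mul, mul_eq_zero, mul_eq_zero] at h0
    exact h0.1.resolve_left ha0
  have hacR₂ : R₂ ≪ R := by
    refine Measure.AbsolutelyContinuous.mk fun s hs h0 => ?_
    rw [Measure.add_apply, add_eq_zero, Measure.smul_apply, Measure.smul_apply, smul_eq_mul,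
      smul_eq_mul, mul_eq_zero, mul_eq_zero] at h0
    exact h0.2.resolve_left hb0
  have hacP : P ≪ R := by
    refine Measure.AbsolutelyContinuous.mk fun s hs h0 => ?_
    rw [Measure.add_apply, Measure.smul_apply, Measure.smul_apply, smul_eq_mul, smul_eq_mul,
      hac₁ (hacR₁ h0), hac₂ (hacR₂ h0), mul_zero, mul_zero, add_zero]
  -- a.e. density identities
  have hD : ∀ᵐ z ∂ R, P.rnDeriv R z
      = a * (P₁.rnDeriv R₁ z * R₁.rnDeriv R z) + b * (P₂.rnDeriv R₂ z * R₂.rnDeriv R z) := by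
    have h1 := Measure.rnDeriv_add' (a • P₁) (b • P₂) R
    have h2 := Measure.rnDeriv_smul_left_of_ne_top' P₁ R ha_top
    have h3 := Measure.rnDeriv_smul_left_of_ne_top' P₂ R hb_top
    have h4 := Measure.rnDeriv_mul_rnDeriv (κ := R) hac₁
    have h5 := Measure.rnDeriv_mul_rnDeriv (κ := R) hac₂
    filter_upwards [h1, h2, h3, h4, h5] with z hz1 hz2 hz3 hz4 hz5
    rw [← hP_def] at hz1
    rw [hz1, Pi.add_apply, hz2, hz3, Pi.smul_apply, Pi.smul_apply, smul_eq_mul, smul_eq_mul,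
      ← hz4, ← hz5, Pi.mul_apply, Pi.mul_apply]
  have hone : ∀ᵐ z ∂ R, a * R₁.rnDeriv R z + b * R₂.rnDeriv R z = 1 := by
    have h1 := Measure.rnDeriv_add' (a • R₁) (b • R₂) R
    have h2 := Measure.rnDeriv_smul_left_of_ne_top' R₁ R ha_top
    have h3 := Measure.rnDeriv_smul_left_of_ne_top' R₂ R hb_top
    have h4 := Measure.rnDeriv_self R
    filter_upwards [h1, h2, h3, h4] with z hz1 hz2 hz3 hz4
    rw [← hR_def] at hz1
    rw [hz1, Pi.add_apply, hz2, hz3, Pi.smul_apply, Pi.smul_apply, smul_eq_mul, smul_eq_mul] at hz4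
    exact hz4
  have hDlt := Measure.rnDeriv_lt_top P R
  have hfin₁ : ∀ᵐ z ∂ R, P₁.rnDeriv R₁ z * R₁.rnDeriv R z ≠ ∞ := by
    filter_upwards [hD, hDlt] with z hz1 hz2
    intro h
    rw [hz1, h, ENNReal.mul_top ha0, top_add] at hz2
    exact absurd hz2 (lt_irrefl _)
  have hfin₂ : ∀ᵐ z ∂ R, P₂.rnDeriv R₂ z * R₂.rnDeriv R z ≠ ∞ := by
    filter_upwards [hD, hDlt] with z hz1 hz2
    intro h
    rw [hz1, h, ENNReal.mul_top hb0, add_top] at hz2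
    exact absurd hz2 (lt_irrefl _)
  have he₁ : ∀ᵐ z ∂ R, R₁.rnDeriv R z ≠ ∞ := by
    filter_upwards [hone] with z hz
    intro h
    rw [h, ENNReal.mul_top ha0, top_add] at hz
    exact ENNReal.top_ne_one hz
  have he₂ : ∀ᵐ z ∂ R, R₂.rnDeriv R z ≠ ∞ := by
    filter_upwards [hone] with z hz
    intro h
    rw [h, ENNReal.mul_top hb0, add_top] at hz
    exact ENNReal.top_ne_one hz
  -- integrability of the transported entropy integrands
  have hint₁' : Integrable (fun z => (P₁.rnDeriv R₁ z).toReal * Real.log (P₁.rnDeriv R₁ z).toReal) R₁ := by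
    have h := (integrable_rnDeriv_smul_iff (f := llr P₁ R₁) hac₁).mpr hint₁
    simpa [llr_def, smul_eq_mul] using h
  have hint₂' : Integrable (fun z => (P₂.rnDeriv R₂ z).toReal * Real.log (P₂.rnDeriv R₂ z).toReal) R₂ := by
    have h := (integrable_rnDeriv_smul_iff (f := llr P₂ R₂) hac₂).mpr hint₂
    simpa [llr_def, smul_eq_mul] using h
  have hF₁ : Integrable (fun z => (R₁.rnDeriv R z).toReal *
      ((P₁.rnDeriv R₁ z).toReal * Real.log (P₁.rnDeriv R₁ z).toReal)) R := by
    have h := (integrable_rnDeriv_smul_iff (f := fun z => (P₁.rnDeriv R₁ z).toReal *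
      Real.log (P₁.rnDeriv R₁ z).toReal) hacR₁).mpr hint₁'
    simpa [smul_eq_mul] using h
  have hF₂ : Integrable (fun z => (R₂.rnDeriv R z).toReal *
      ((P₂.rnDeriv R₂ z).toReal * Real.log (P₂.rnDeriv R₂ z).toReal)) R := by
    have h := (integrable_rnDeriv_smul_iff (f := fun z => (P₂.rnDeriv R₂ z).toReal *
      Real.log (P₂.rnDeriv R₂ z).toReal) hacR₂).mpr hint₂'
    simpa [smul_eq_mul] using h
  have hIF₁ : ∫ z, (R₁.rnDeriv R z).toReal *
      ((P₁.rnDeriv R₁ z).toReal * Real.log (P₁.rnDeriv R₁ z).toReal) ∂ R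
      = ∫ z, llr P₁ R₁ z ∂P₁ := by
    have e1 := integral_rnDeriv_smul (f := fun z => (P₁.rnDeriv R₁ z).toReal *
      Real.log (P₁.rnDeriv R₁ z).toReal) hacR₁
    have e2 := integral_rnDeriv_smul (f := llr P₁ R₁) hac₁
    simp only [smul_eq_mul] at e1 e2
    rw [e1, ← e2]
    rfl
  have hIF₂ : ∫ z, (R₂.rnDeriv R z).toReal *
      ((P₂.rnDeriv R₂ z).toReal * Real.log (P₂.rnDeriv R₂ z).toReal) ∂ R
      = ∫ z, llr P₂ R₂ z ∂P₂ := by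
    have e1 := integral_rnDeriv_smul (f := fun z => (P₂.rnDeriv R₂ z).toReal *
      Real.log (P₂.rnDeriv R₂ z).toReal) hacR₂
    have e2 := integral_rnDeriv_smul (f := llr P₂ R₂) hac₂
    simp only [smul_eq_mul] at e1 e2
    rw [e1, ← e2]
    rfl
  -- the pointwise convexity inequality
  have hL_le : ∀ᵐ z ∂ R, (P.rnDeriv R z).toReal * Real.log (P.rnDeriv R z).toReal
      ≤ a.toReal * ((R₁.rnDeriv R z).toReal *
          ((P₁.rnDeriv R₁ z).toReal * Real.log (P₁.rnDeriv R₁ z).toReal))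
        + b.toReal * ((R₂.rnDeriv R z).toReal *
          ((P₂.rnDeriv R₂ z).toReal * Real.log (P₂.rnDeriv R₂ z).toReal)) := by
    filter_upwards [hD, hone, hfin₁, hfin₂, he₁, he₂] with z hz hz1 hf1 hf2 hE1 hE2
    set x₁ := (P₁.rnDeriv R₁ z).toReal
    set x₂ := (P₂.rnDeriv R₂ z).toReal
    set ρ₁ := (R₁.rnDeriv R z).toReal
    set ρ₂ := (R₂.rnDeriv R z).toReal
    have hw : a.toReal * ρ₁ + b.toReal * ρ₂ = 1 := by
      have h := congrArg ENNReal.toReal hz1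
      rwa [ENNReal.toReal_add (ENNReal.mul_ne_top ha_top hE1) (ENNReal.mul_ne_top hb_top hE2),
        ENNReal.toReal_mul, ENNReal.toReal_mul, ENNReal.toReal_one] at h
    have hG : (P.rnDeriv R z).toReal = a.toReal * (x₁ * ρ₁) + b.toReal * (x₂ * ρ₂) := by
      have h := congrArg ENNReal.toReal hz
      rwa [ENNReal.toReal_add (ENNReal.mul_ne_top ha_top hf1) (ENNReal.mul_ne_top hb_top hf2),
        ENNReal.toReal_mul, ENNReal.toReal_mul, ENNReal.toReal_mul, ENNReal.toReal_mul] at h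
    have hcvx := Real.convexOn_mul_log.2 (Set.mem_Ici.mpr (ENNReal.toReal_nonneg : (0:ℝ) ≤ x₁))
      (Set.mem_Ici.mpr (ENNReal.toReal_nonneg : (0:ℝ) ≤ x₂))
      (mul_nonneg ENNReal.toReal_nonneg ENNReal.toReal_nonneg)
      (mul_nonneg ENNReal.toReal_nonneg ENNReal.toReal_nonneg) hw
    simp only [smul_eq_mul] at hcvx
    have harg : a.toReal * (x₁ * ρ₁) + b.toReal * (x₂ * ρ₂)
        = a.toReal * ρ₁ * x₁ + b.toReal * ρ₂ * x₂ := by ring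
    rw [hG, harg]
    refine hcvx.trans (le_of_eq ?_)
    ring
  have hL_ge : ∀ z, -Real.exp (-1) ≤ (P.rnDeriv R z).toReal * Real.log (P.rnDeriv R z).toReal :=
    fun z => neg_exp_le_mul_log ENNReal.toReal_nonneg
  -- integrability of the mixture integrand
  have hmeasL : AEStronglyMeasurable
      (fun z => (P.rnDeriv R z).toReal * Real.log (P.rnDeriv R z).toReal) R :=
    ((Measure.measurable_rnDeriv P R).ennreal_toReal.mul
      (Real.measurable_log.comp (Measure.measurable_rnDeriv P R).ennreal_toReal)).aestronglyMeasurable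
  have hLint : Integrable (fun z => (P.rnDeriv R z).toReal * Real.log (P.rnDeriv R z).toReal) R := by
    refine Integrable.mono'
      (g := fun z => |a.toReal * ((R₁.rnDeriv R z).toReal *
          ((P₁.rnDeriv R₁ z).toReal * Real.log (P₁.rnDeriv R₁ z).toReal))
        + b.toReal * ((R₂.rnDeriv R z).toReal *
          ((P₂.rnDeriv R₂ z).toReal * Real.log (P₂.rnDeriv R₂ z).toReal))| + Real.exp (-1))
      (((hF₁.const_mul _).add (hF₂.const_mul _)).abs.add (integrable_const _)) hmeasL ?_
    filter_upwards [hL_le] with z hz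
    rw [Real.norm_eq_abs, abs_le]
    constructor
    · have h1 := hL_ge z
      have h2 : (0:ℝ) ≤ |a.toReal * ((R₁.rnDeriv R z).toReal *
          ((P₁.rnDeriv R₁ z).toReal * Real.log (P₁.rnDeriv R₁ z).toReal))
        + b.toReal * ((R₂.rnDeriv R z).toReal *
          ((P₂.rnDeriv R₂ z).toReal * Real.log (P₂.rnDeriv R₂ z).toReal))| := abs_nonneg _
      linarith
    · have h2 := le_abs_self (a.toReal * ((R₁.rnDeriv R z).toReal *
          ((P₁.rnDeriv R₁ z).toReal * Real.log (P₁.rnDeriv R₁ z).toReal))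
        + b.toReal * ((R₂.rnDeriv R z).toReal *
          ((P₂.rnDeriv R₂ z).toReal * Real.log (P₂.rnDeriv R₂ z).toReal)))
      have h3 := Real.exp_pos (-1)
      linarith
  have hintP : Integrable (llr P R) P := by
    refine (integrable_rnDeriv_smul_iff (f := llr P R) hacP).mp ?_
    simpa [llr_def, smul_eq_mul] using hLint
  -- integral comparison
  have hIeq : ∫ z, llr P R z ∂P
      = ∫ z, (P.rnDeriv R z).toReal * Real.log (P.rnDeriv R z).toReal ∂ R := by
    have e := integral_rnDeriv_smul (f := llr P R) hacP
    simp only [smul_eq_mul] at e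
    rw [← e]
    rfl
  have hIle : ∫ z, llr P R z ∂P
      ≤ a.toReal * ∫ z, llr P₁ R₁ z ∂P₁ + b.toReal * ∫ z, llr P₂ R₂ z ∂P₂ := by
    rw [hIeq]
    calc ∫ z, (P.rnDeriv R z).toReal * Real.log (P.rnDeriv R z).toReal ∂ R
        ≤ ∫ z, (a.toReal * ((R₁.rnDeriv R z).toReal *
            ((P₁.rnDeriv R₁ z).toReal * Real.log (P₁.rnDeriv R₁ z).toReal))
          + b.toReal * ((R₂.rnDeriv R z).toReal *
            ((P₂.rnDeriv R₂ z).toReal * Real.log (P₂.rnDeriv R₂ z).toReal))) ∂ R :=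
          integral_mono_ae hLint ((hF₁.const_mul _).add (hF₂.const_mul _)) hL_le
      _ = a.toReal * ∫ z, llr P₁ R₁ z ∂P₁ + b.toReal * ∫ z, llr P₂ R₂ z ∂P₂ := by
          rw [integral_add (hF₁.const_mul _) (hF₂.const_mul _), integral_const_mul,
            integral_const_mul, hIF₁, hIF₂]
  rw [klDiv_of_ac hacP hintP, klDiv_of_ac hac₁ hint₁, klDiv_of_ac hac₂ hint₂]
  calc ENNReal.ofReal (∫ z, llr P R z ∂P)
      ≤ ENNReal.ofReal (a.toReal * ∫ z, llr P₁ R₁ z ∂P₁ + b.toReal * ∫ z, llr P₂ R₂ z ∂P₂) :=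
        ENNReal.ofReal_le_ofReal hIle
    _ ≤ ENNReal.ofReal (a.toReal * ∫ z, llr P₁ R₁ z ∂P₁)
        + ENNReal.ofReal (b.toReal * ∫ z, llr P₂ R₂ z ∂P₂) := ENNReal.ofReal_add_le
    _ = a * ENNReal.ofReal (∫ z, llr P₁ R₁ z ∂P₁)
        + b * ENNReal.ofReal (∫ z, llr P₂ R₂ z ∂P₂) := by
        rw [ENNReal.ofReal_mul ENNReal.toReal_nonneg, ENNReal.ofReal_mul ENNReal.toReal_nonneg,
          ENNReal.ofReal_toReal ha_top, ENNReal.ofReal_toReal hb_top]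


/-- For a fixed source distribution `μ`, the mutual information functional
`Q ↦ I(μ, Q)` is convex in the kernel `Q`: for a pointwise convex combination
`Q = λ Q₁ + (1−λ) Q₂` one has `I(μ,Q) ≤ λ I(μ,Q₁) + (1−λ) I(μ,Q₂)`. -/
theorem mutualInfo_convex_in_kernel
    {X Y : Type*} [MeasurableSpace X] [MeasurableSpace Y]
    [StandardBorelSpace X] [StandardBorelSpace Y]
    (μ : Measure X) [IsProbabilityMeasure μ]
    (Q₁ Q₂ Q : Kernel X Y) [IsMarkovKernel Q₁] [IsMarkovKernel Q₂] [IsMarkovKernel Q]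
    (lam : ℝ≥0∞) (hlam : lam ≤ 1)
    (hQ : ∀ x, Q x = lam • Q₁ x + (1 - lam) • Q₂ x) :
    mutualInfoFun μ Q ≤ lam * mutualInfoFun μ Q₁ + (1 - lam) * mutualInfoFun μ Q₂ := by
  have hPmix : μ.compProd Q = lam • μ.compProd Q₁ + (1 - lam) • μ.compProd Q₂ := by
    ext s hs
    rw [Measure.compProd_apply hs]
    have h1 : ∀ x, Q x (Prod.mk x ⁻¹' s)
        = lam * Q₁ x (Prod.mk x ⁻¹' s) + (1 - lam) * Q₂ x (Prod.mk x ⁻¹' s) := fun x => by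
      rw [hQ x, Measure.add_apply, Measure.smul_apply, Measure.smul_apply, smul_eq_mul,
        smul_eq_mul]
    simp_rw [h1]
    rw [lintegral_add_left ((Kernel.measurable_kernel_prodMk_left hs).const_mul _),
      lintegral_const_mul _ (Kernel.measurable_kernel_prodMk_left hs),
      lintegral_const_mul _ (Kernel.measurable_kernel_prodMk_left hs),
      Measure.add_apply, Measure.smul_apply, Measure.smul_apply, smul_eq_mul, smul_eq_mul,
      Measure.compProd_apply hs, Measure.compProd_apply hs]
  have hsnd : (μ.compProd Q).snd
      = lam • (μ.compProd Q₁).snd + (1 - lam) • (μ.compProd Q₂).snd := by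
    rw [hPmix]
    simp only [Measure.snd]
    rw [Measure.map_add _ _ measurable_snd, Measure.map_smul, Measure.map_smul]
  have hprod : μ.prod ((μ.compProd Q).snd)
      = lam • μ.prod ((μ.compProd Q₁).snd) + (1 - lam) • μ.prod ((μ.compProd Q₂).snd) := by
    rw [hsnd]
    ext s hs
    rw [Measure.prod_apply hs]
    have h1 : ∀ x, (lam • (μ.compProd Q₁).snd + (1 - lam) • (μ.compProd Q₂).snd)
          (Prod.mk x ⁻¹' s)
        = lam * (μ.compProd Q₁).snd (Prod.mk x ⁻¹' s)
          + (1 - lam) * (μ.compProd Q₂).snd (Prod.mk x ⁻¹' s) := fun x => by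
      rw [Measure.add_apply, Measure.smul_apply, Measure.smul_apply, smul_eq_mul, smul_eq_mul]
    simp_rw [h1]
    rw [lintegral_add_left ((measurable_measure_prodMk_left hs).const_mul _),
      lintegral_const_mul _ (measurable_measure_prodMk_left hs),
      lintegral_const_mul _ (measurable_measure_prodMk_left hs),
      Measure.add_apply, Measure.smul_apply, Measure.smul_apply, smul_eq_mul, smul_eq_mul,
      Measure.prod_apply hs, Measure.prod_apply hs]
  simp only [mutualInfoFun]
  rw [hprod, hPmix]
  exact klDiv_convex _ _ _ _ lam hlam
end
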